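/- Under the conformal-block-expansion setup below, let ε ∈ (0, 2Δφ), set τ* := 2Δφ − ε, and assume there exist 0 < a < b < 1, constants C₁, C₂ > 0 and functions F_i : (0,1) → (0,∞) such that for every i ∈ I with τ_i ≤ τ* and all z, z̄ with 0 < z̄ ≤ a < b ≤ z < 1 one has C₁ · z̄^{τ_i/2} F_i(z) ≤ g_i(z, z̄) ≤ C₂ · z̄^{τ_i/2} F_i(z). Then for all z, z̄, z̄' with 0 < z ≤ 1−b < 1−a ≤ z̄ ≤ z̄' < 1 one has (z z̄ / ((1−z)(1−z̄)))^{Δφ} · ∑_{i ∈ I : τ_i ≤ τ*} p_i · g_i(1−z, 1−z̄) ≤ (C₂/C₁) · ((1−z̄')/(1−z̄))^{ε/2} · g(z, z̄'). -/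

import Mathlib

open Real

lemma rpow_key (Δφ ε τi z zb zb' : ℝ) (hΔ : 0 < Δφ) (hτle : τi ≤ 2*Δφ - ε)
    (hz : 0 < z) (hz1 : z < 1) (hzb : 0 < zb) (hle : zb ≤ zb') (hzb' : zb' < 1) :
    (z*zb/((1-z)*(1-zb)))^Δφ * ((1-zb)/(1-zb'))^(τi/2)
      ≤ ((1-zb')/(1-zb))^(ε/2) * (z*zb'/((1-z)*(1-zb')))^Δφ := by
  have hu' : 0 < 1 - zb' := by linarith
  have hu : 0 < 1 - zb := by linarith
  have hzb'0 : 0 < zb' := lt_of_lt_of_le hzb hle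
  have h1z : 0 < 1 - z := by linarith
  set s : ℝ := (1-zb')/(1-zb) with hs
  have hs0 : 0 < s := div_pos hu' hu
  have hs1 : s ≤ 1 := (div_le_one hu).2 (by linarith)
  have hA : z*zb/((1-z)*(1-zb)) = (z/(1-z)) * (zb/(1-zb)) := by field_simp
  have hB : z*zb'/((1-z)*(1-zb')) = (z/(1-z)) * (zb'/(1-zb')) := by field_simp
  rw [hA, hB, Real.mul_rpow (by positivity) (by positivity),
    Real.mul_rpow (by positivity) (by positivity)]
  rw [mul_assoc, mul_comm (s^(ε/2)) _, mul_assoc]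
  apply mul_le_mul_of_nonneg_left _ (Real.rpow_nonneg (by positivity) _)
  -- goal: (zb/(1-zb))^Δφ * ((1-zb)/(1-zb'))^(τi/2) ≤ (zb'/(1-zb'))^Δφ * s^(ε/2)
  have h1 : (zb/(1-zb))^Δφ ≤ (zb'/(1-zb))^Δφ := by
    gcongr
  have h2 : (zb'/(1-zb))^Δφ = (zb'/(1-zb'))^Δφ * s^Δφ := by
    rw [← Real.mul_rpow (by positivity) hs0.le]
    congr 1
    rw [hs]; field_simp
  have h3 : ((1-zb)/(1-zb'))^(τi/2) = s^(-(τi/2)) := by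
    rw [hs, Real.rpow_neg (div_pos hu' hu).le, ← Real.inv_rpow (div_pos hu' hu).le, inv_div]
  have h4 : s^Δφ * s^(-(τi/2)) = s^(Δφ - τi/2) := by
    rw [← Real.rpow_add hs0]; ring_nf
  have h5 : s^(Δφ - τi/2) ≤ s^(ε/2) :=
    Real.rpow_le_rpow_of_exponent_ge hs0 hs1 (by linarith)
  calc (zb/(1-zb))^Δφ * ((1-zb)/(1-zb'))^(τi/2)
      ≤ (zb'/(1-zb))^Δφ * ((1-zb)/(1-zb'))^(τi/2) := by
        apply mul_le_mul_of_nonneg_right h1 (Real.rpow_nonneg (by positivity) _)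
    _ = (zb'/(1-zb'))^Δφ * (s^Δφ * s^(-(τi/2))) := by rw [h2, h3]; ring
    _ = (zb'/(1-zb'))^Δφ * s^(Δφ - τi/2) := by rw [h4]
    _ ≤ (zb'/(1-zb'))^Δφ * s^(ε/2) := by
        apply mul_le_mul_of_nonneg_left h5 (Real.rpow_nonneg (by positivity) _)


open Set

/-- A single conformal block contribution:
`g_i(z, z̄) = (z z̄)^(τᵢ/2) ∑_{n,m} a^{(i)}_{n,m} z^n z̄^m`. -/
noncomputable def blockFun (τi : ℝ) (coef : ℕ × ℕ → ℝ) (z zb : ℝ) : ℝ :=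
  (z * zb) ^ (τi / 2) * ∑' nm : ℕ × ℕ, coef nm * z ^ nm.1 * zb ^ nm.2

/-- crossed-channel low-twist estimate, Eq. (2.36): with approximate
factorization for the blocks of twist `τᵢ ≤ τ* = 2Δφ - ε`, for all
`0 < z ≤ 1-b < 1-a ≤ z̄ ≤ z̄' < 1` one has
`(z z̄/((1-z)(1-z̄)))^Δφ ∑_{τᵢ ≤ τ*} pᵢ gᵢ(1-z,1-z̄)
  ≤ (C₂/C₁) ((1-z̄')/(1-z̄))^(ε/2) g(z, z̄')`. -/
theorem stmt7 {I : Type*} [Countable I] (Δφ : ℝ) (hΔ : 0 < Δφ)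
    (p τ : I → ℝ) (coef : I → ℕ × ℕ → ℝ)
    (hp : ∀ i, 0 ≤ p i) (hτ : ∀ i, 0 ≤ τ i) (hcoef : ∀ i nm, 0 ≤ coef i nm)
    (hinner : ∀ i, ∀ z zb : ℝ, 0 ≤ z → z < 1 → 0 ≤ zb → zb < 1 →
      Summable (fun nm : ℕ × ℕ => coef i nm * z ^ nm.1 * zb ^ nm.2))
    (hsum : ∀ z zb : ℝ, z ∈ Ioo (0:ℝ) 1 → zb ∈ Ioo (0:ℝ) 1 →
      Summable (fun i => p i * blockFun (τ i) (coef i) z zb))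
    (hcross : ∀ z zb : ℝ, z ∈ Ioo (0:ℝ) 1 → zb ∈ Ioo (0:ℝ) 1 →
      1 + ∑' i, p i * blockFun (τ i) (coef i) z zb =
        (z * zb / ((1 - z) * (1 - zb))) ^ Δφ *
          (1 + ∑' i, p i * blockFun (τ i) (coef i) (1 - z) (1 - zb)))
    (ε : ℝ) (hε0 : 0 < ε) (hε2 : ε < 2 * Δφ)
    (a b : ℝ) (ha : 0 < a) (hab : a < b) (hb : b < 1)
    (C₁ C₂ : ℝ) (hC₁ : 0 < C₁) (hC₂ : 0 < C₂) (F : I → ℝ → ℝ)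
    (hFpos : ∀ i, ∀ z : ℝ, 0 < z → z < 1 → 0 < F i z)
    (hfact : ∀ i, τ i ≤ 2 * Δφ - ε → ∀ z zb : ℝ, 0 < zb → zb ≤ a → b ≤ z → z < 1 →
      C₁ * (zb ^ (τ i / 2) * F i z) ≤ blockFun (τ i) (coef i) z zb ∧
        blockFun (τ i) (coef i) z zb ≤ C₂ * (zb ^ (τ i / 2) * F i z)) :
    ∀ z zb zb' : ℝ, 0 < z → z ≤ 1 - b → 1 - a ≤ zb → zb ≤ zb' → zb' < 1 →
      (z * zb / ((1 - z) * (1 - zb))) ^ Δφ *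
        (∑' i : {j : I // τ j ≤ 2 * Δφ - ε},
          p i.1 * blockFun (τ i.1) (coef i.1) (1 - z) (1 - zb)) ≤
        (C₂ / C₁) * ((1 - zb') / (1 - zb)) ^ (ε / 2) *
          (1 + ∑' i, p i * blockFun (τ i) (coef i) z zb') := by
  intro z zb zb' hz hz1b hzb hzbzb' hzb'
  have hz1 : z < 1 := by linarith
  have hzb0 : 0 < zb := by linarith
  have hzb1 : zb < 1 := lt_of_le_of_lt hzbzb' hzb'
  have hzb'0 : 0 < zb' := lt_of_lt_of_le hzb0 hzbzb'
  have hu' : 0 < 1 - zb' := by linarith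
  have hu : 0 < 1 - zb := by linarith
  have hua : 1 - zb ≤ a := by linarith
  have hua' : 1 - zb' ≤ a := by linarith
  have hbz : b ≤ 1 - z := by linarith
  have h1z1 : 1 - z < 1 := by linarith
  have h1z0 : 0 < 1 - z := by linarith
  -- nonnegativity of blocks
  have hblock_nonneg : ∀ (i : I) (x y : ℝ), 0 ≤ x → 0 ≤ y →
      0 ≤ blockFun (τ i) (coef i) x y := by
    intro i x y hx hy
    unfold blockFun
    refine mul_nonneg (Real.rpow_nonneg (mul_nonneg hx hy) _) (tsum_nonneg fun nm => ?_)
    exact mul_nonneg (mul_nonneg (hcoef i nm) (pow_nonneg hx _)) (pow_nonneg hy _)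
  set A : ℝ := (z * zb / ((1 - z) * (1 - zb))) ^ Δφ with hA
  set B : ℝ := (z * zb' / ((1 - z) * (1 - zb'))) ^ Δφ with hB
  set K : ℝ := (C₂ / C₁) * ((1 - zb') / (1 - zb)) ^ (ε / 2) with hK
  have hA0 : 0 ≤ A := Real.rpow_nonneg (by positivity) _
  have hB0 : 0 ≤ B := Real.rpow_nonneg (by positivity) _
  have hK0 : 0 ≤ K := by positivity
  -- per-term key inequality
  have key : ∀ i : {j : I // τ j ≤ 2 * Δφ - ε},
      A * (p i.1 * blockFun (τ i.1) (coef i.1) (1 - z) (1 - zb)) ≤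
      (K * B) * (p i.1 * blockFun (τ i.1) (coef i.1) (1 - z) (1 - zb')) := by
    intro i
    have h2 := (hfact i.1 i.2 (1 - z) (1 - zb) hu hua hbz h1z1).2
    have h1 := (hfact i.1 i.2 (1 - z) (1 - zb') hu' hua' hbz h1z1).1
    have hdiv : ((1 - zb) / (1 - zb')) ^ (τ i.1 / 2)
        = (1 - zb) ^ (τ i.1 / 2) / (1 - zb') ^ (τ i.1 / 2) :=
      Real.div_rpow hu.le hu'.le _
    have hu'pow : (0:ℝ) < (1 - zb') ^ (τ i.1 / 2) := Real.rpow_pos_of_pos hu' _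
    have hgub : blockFun (τ i.1) (coef i.1) (1 - z) (1 - zb) ≤
        (C₂ / C₁) * ((1 - zb) / (1 - zb')) ^ (τ i.1 / 2) *
          blockFun (τ i.1) (coef i.1) (1 - z) (1 - zb') := by
      calc blockFun (τ i.1) (coef i.1) (1 - z) (1 - zb)
          ≤ C₂ * ((1 - zb) ^ (τ i.1 / 2) * F i.1 (1 - z)) := h2
        _ = (C₂ / C₁) * ((1 - zb) / (1 - zb')) ^ (τ i.1 / 2) *
              (C₁ * ((1 - zb') ^ (τ i.1 / 2) * F i.1 (1 - z))) := by
            rw [hdiv]; field_simp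
        _ ≤ _ := by
            apply mul_le_mul_of_nonneg_left h1
            positivity
    have hrpow := rpow_key Δφ ε (τ i.1) z zb zb' hΔ i.2 hz hz1 hzb0 hzbzb' hzb'
    have hg'0 : 0 ≤ blockFun (τ i.1) (coef i.1) (1 - z) (1 - zb') :=
      hblock_nonneg i.1 _ _ h1z0.le hu'.le
    calc A * (p i.1 * blockFun (τ i.1) (coef i.1) (1 - z) (1 - zb))
        ≤ A * (p i.1 * ((C₂ / C₁) * ((1 - zb) / (1 - zb')) ^ (τ i.1 / 2) *
            blockFun (τ i.1) (coef i.1) (1 - z) (1 - zb'))) := by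
          apply mul_le_mul_of_nonneg_left _ hA0
          exact mul_le_mul_of_nonneg_left hgub (hp i.1)
      _ = (C₂ / C₁) * (A * ((1 - zb) / (1 - zb')) ^ (τ i.1 / 2)) *
            (p i.1 * blockFun (τ i.1) (coef i.1) (1 - z) (1 - zb')) := by ring
      _ ≤ (C₂ / C₁) * (((1 - zb') / (1 - zb)) ^ (ε / 2) * B) *
            (p i.1 * blockFun (τ i.1) (coef i.1) (1 - z) (1 - zb')) := by
          apply mul_le_mul_of_nonneg_right _ (mul_nonneg (hp i.1) hg'0)
          apply mul_le_mul_of_nonneg_left hrpow (by positivity)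
      _ = (K * B) * (p i.1 * blockFun (τ i.1) (coef i.1) (1 - z) (1 - zb')) := by
          rw [hK]; ring
  -- summability
  have hsum1 : Summable (fun i : {j : I // τ j ≤ 2 * Δφ - ε} =>
      p i.1 * blockFun (τ i.1) (coef i.1) (1 - z) (1 - zb)) :=
    (hsum (1 - z) (1 - zb) ⟨h1z0, h1z1⟩ ⟨hu, by linarith⟩).subtype _
  have hsum2 : Summable (fun i : {j : I // τ j ≤ 2 * Δφ - ε} =>
      p i.1 * blockFun (τ i.1) (coef i.1) (1 - z) (1 - zb')) :=
    (hsum (1 - z) (1 - zb') ⟨h1z0, h1z1⟩ ⟨hu', by linarith⟩).subtype _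
  have hsumall : Summable (fun i : I =>
      p i * blockFun (τ i) (coef i) (1 - z) (1 - zb')) :=
    hsum (1 - z) (1 - zb') ⟨h1z0, h1z1⟩ ⟨hu', by linarith⟩
  have hstep : (∑' i : {j : I // τ j ≤ 2 * Δφ - ε},
      p i.1 * blockFun (τ i.1) (coef i.1) (1 - z) (1 - zb')) ≤
      ∑' i : I, p i * blockFun (τ i) (coef i) (1 - z) (1 - zb') := by
    apply Summable.tsum_le_tsum_of_inj (Subtype.val) Subtype.val_injective
      (fun c _ => mul_nonneg (hp c) (hblock_nonneg c _ _ h1z0.le hu'.le))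
      (fun b => le_refl _) hsum2 hsumall
  have hGpos : 0 ≤ ∑' i : I, p i * blockFun (τ i) (coef i) (1 - z) (1 - zb') :=
    tsum_nonneg fun i => mul_nonneg (hp i) (hblock_nonneg i _ _ h1z0.le hu'.le)
  calc A * (∑' i : {j : I // τ j ≤ 2 * Δφ - ε},
        p i.1 * blockFun (τ i.1) (coef i.1) (1 - z) (1 - zb))
      = ∑' i : {j : I // τ j ≤ 2 * Δφ - ε},
          A * (p i.1 * blockFun (τ i.1) (coef i.1) (1 - z) (1 - zb)) :=
        tsum_mul_left.symm
    _ ≤ ∑' i : {j : I // τ j ≤ 2 * Δφ - ε},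
          (K * B) * (p i.1 * blockFun (τ i.1) (coef i.1) (1 - z) (1 - zb')) :=
        Summable.tsum_le_tsum key (hsum1.mul_left A) (hsum2.mul_left (K * B))
    _ = (K * B) * ∑' i : {j : I // τ j ≤ 2 * Δφ - ε},
          p i.1 * blockFun (τ i.1) (coef i.1) (1 - z) (1 - zb') := tsum_mul_left
    _ ≤ (K * B) * ∑' i : I, p i * blockFun (τ i) (coef i) (1 - z) (1 - zb') :=
        mul_le_mul_of_nonneg_left hstep (mul_nonneg hK0 hB0)
    _ ≤ (K * B) * (1 + ∑' i : I, p i * blockFun (τ i) (coef i) (1 - z) (1 - zb')) := by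
        nlinarith [mul_nonneg hK0 hB0]
    _ = K * (B * (1 + ∑' i : I, p i * blockFun (τ i) (coef i) (1 - z) (1 - zb'))) := by
        ring
    _ = K * (1 + ∑' i, p i * blockFun (τ i) (coef i) z zb') := by
        rw [← hcross z zb' ⟨hz, hz1⟩ ⟨hzb'0, hzb'⟩]
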